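/- Let ν ∈ ℝ be such that ν + 3/2 is not zero or a negative integer, and suppose ν ≥ (e/(8 sin 1 + 6 − 2e))·[4(e−1)³ + 6(e−1)² + (e+1) + 6/e − 12/e²] − 3/2. Then, writing V_ν(z) = ∑_{n≥0} ((1/4)^n / ((3/2)_n (ν+3/2)_n)) z^n (the normalized modified Struve function of the first kind, case b = 1, c = −1), the function 3(2ν+3)(V_ν − 1) belongs to K_e and the function z ↦ 3(2ν+3) z V'_ν(z) belongs to S*_e. -/

import Mathlib

open Complex Metric Set

noncomputable def poch (x : ℂ) (n : ℕ) : ℂ := ∏ k ∈ Finset.range n, (x + k)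

/-- The class `P_e`: `p` is analytic on the unit disk, `p 0 = 1`, and `p` maps the
unit disk into `exp(𝔻)` (equivalently, `p` is subordinate to `exp`). -/
def memPe (p : ℂ → ℂ) : Prop :=
  AnalyticOnNhd ℂ p (Metric.ball 0 1) ∧ p 0 = 1 ∧
    ∀ z ∈ Metric.ball (0:ℂ) 1, p z ∈ Complex.exp '' Metric.ball 0 1

/-- The class `K_e` of exponential convex functions. -/
def memKe (f : ℂ → ℂ) : Prop :=
  AnalyticOnNhd ℂ f (Metric.ball 0 1) ∧ f 0 = 0 ∧ deriv f 0 = 1 ∧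
    (∀ z ∈ Metric.ball (0:ℂ) 1, deriv f z ≠ 0) ∧
    memPe (fun z => 1 + z * deriv (deriv f) z / deriv f z)

/-- The class `S*_e` of exponential starlike functions. -/
def memSe (f : ℂ → ℂ) : Prop :=
  AnalyticOnNhd ℂ f (Metric.ball 0 1) ∧ f 0 = 0 ∧ deriv f 0 = 1 ∧
    (∀ z ∈ Metric.ball (0:ℂ) 1, z ≠ 0 → f z ≠ 0) ∧
    memPe (fun z => if z = 0 then 1 else z * deriv f z / f z)

/-- The normalized generalized Struve function of the first kind
`u_{κ,c}(z) = ∑_{n≥0} ((−c/4)^n / ((3/2)_n (κ)_n)) z^n`. -/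
noncomputable def struveU (κ c : ℂ) (z : ℂ) : ℂ :=
  ∑' n : ℕ, (-c / 4) ^ n / (poch (3/2) n * poch κ n) * z ^ n


open Filter Finset Topology

lemma kappa_ge (ν : ℝ)
    (h : ν ≥ Real.exp 1 / (8 * Real.sin 1 + 6 - 2 * Real.exp 1) *
        (4 * (Real.exp 1 - 1) ^ 3 + 6 * (Real.exp 1 - 1) ^ 2 + (Real.exp 1 + 1) +
          6 / Real.exp 1 - 12 / (Real.exp 1) ^ 2) - 3 / 2) : 10 ≤ ν + 3/2 := by
  have he1 := Real.exp_one_gt_d9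
  have he2 := Real.exp_one_lt_d9
  have hs1 : Real.sin 1 ≤ 1 := Real.sin_le_one 1
  have hs0 : 0 < Real.sin 1 :=
    Real.sin_pos_of_pos_of_lt_pi one_pos (by nlinarith [Real.pi_gt_three])
  set e := Real.exp 1 with he
  have he0 : (0:ℝ) < e := Real.exp_pos 1
  have hd0 : 0 < 8 * Real.sin 1 + 6 - 2 * e := by nlinarith
  have hE : (0.317 : ℝ) ≤ e / (8 * Real.sin 1 + 6 - 2 * e) := by
    rw [le_div_iff₀ hd0]; nlinarith
  have hS : (40 : ℝ) ≤ 4*(e-1)^3 + 6*(e-1)^2 + (e+1) + 6/e - 12/e^2 := by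
    have h6 : (2.2:ℝ) ≤ 6/e := by rw [le_div_iff₀ he0]; nlinarith
    have h12 : 12/e^2 ≤ (1.7:ℝ) := by
      rw [div_le_iff₀ (by positivity)]; nlinarith [sq_nonneg (e - 2.7182818283)]
    have hc : (1.718:ℝ) ≤ e - 1 := by nlinarith
    have h2 : (2.95:ℝ) ≤ (e-1)^2 := by nlinarith
    have h3 : (5.06:ℝ) ≤ (e-1)^3 := by nlinarith
    linarith
  have hES : (0.317:ℝ) * 40 ≤ (e / (8 * Real.sin 1 + 6 - 2 * e)) *
      (4*(e-1)^3 + 6*(e-1)^2 + (e+1) + 6/e - 12/e^2) :=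
    mul_le_mul hE hS (by norm_num) (div_nonneg he0.le hd0.le)
  nlinarith

lemma nat_succ_le_two_pow (n : ℕ) : (n + 1 : ℝ) ≤ 2 ^ n := by
  exact_mod_cast Nat.lt_two_pow_self (n := n)

lemma summable_aux (k : ℕ) {r : ℝ} (h0 : 0 < r) (h1 : r < 1) :
    Summable (fun n : ℕ => ((n : ℝ) + 1) ^ k * r ^ n) := by
  have h : Summable (fun n : ℕ => (n : ℝ) ^ k * r ^ n) :=
    summable_pow_mul_geometric_of_norm_lt_one k
      (by rw [Real.norm_eq_abs, abs_of_pos h0]; exact h1)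
  have h2 : Summable (fun n : ℕ => ((n : ℝ) + 1) ^ k * r ^ (n + 1)) := by
    have h2' := h.comp_injective Nat.succ_injective
    refine h2'.congr fun n => ?_
    simp only [Function.comp_apply, Nat.succ_eq_add_one, Nat.cast_add, Nat.cast_one]
  refine ((h2.mul_left r⁻¹).congr fun n => ?_)
  field_simp [pow_succ]
  ring

lemma summable_term {a : ℕ → ℂ} {C : ℝ} {k : ℕ}
    (hB : ∀ n, ‖a n‖ ≤ C * ((n : ℝ) + 1) ^ k * (1/4) ^ n) {z : ℂ} (hz : ‖z‖ ≤ 3/2) :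
    Summable (fun n => a n * z ^ n) := by
  have hC : 0 ≤ C := by have := (norm_nonneg (a 0)).trans (hB 0); simpa using this
  have hu : Summable (fun n : ℕ => C * ((n : ℝ) + 1) ^ k * (3/8) ^ n) :=
    ((summable_aux k (r := 3/8) (by norm_num) (by norm_num)).mul_left C).congr fun n => by ring
  apply Summable.of_norm
  refine Summable.of_nonneg_of_le (fun _ => norm_nonneg _) (fun n => ?_) hu
  calc ‖a n * z ^ n‖ = ‖a n‖ * ‖z‖ ^ n := by rw [norm_mul, norm_pow]
    _ ≤ (C * ((n : ℝ) + 1) ^ k * (1/4) ^ n) * (3/2) ^ n := by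
        refine mul_le_mul (hB n) (pow_le_pow_left₀ (norm_nonneg z) hz n)
          (by positivity) (by positivity)
    _ = C * ((n : ℝ) + 1) ^ k * (3/8) ^ n := by
        rw [show ((3:ℝ)/8) = (1/4) * (3/2) by norm_num, mul_pow]; ring

lemma hasDerivAt_tsum_pow {a : ℕ → ℂ} {C : ℝ} {k : ℕ}
    (hB : ∀ n, ‖a n‖ ≤ C * ((n : ℝ) + 1) ^ k * (1/4) ^ n) {x : ℂ}
    (hx : x ∈ ball (0 : ℂ) (3/2)) :
    HasDerivAt (fun z => ∑' n, a n * z ^ n) (∑' n : ℕ, ((n : ℂ) + 1) * a (n + 1) * x ^ n) x := by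
  have hC : 0 ≤ C := by have := (norm_nonneg (a 0)).trans (hB 0); simpa using this
  have hmem : ∀ z : ℂ, z ∈ ball (0 : ℂ) (3/2) → ‖z‖ < 3/2 := fun z hz => by
    simpa [mem_ball, dist_eq_norm] using hz
  have hbd : ∀ (n : ℕ), ∀ z ∈ ball (0 : ℂ) (3/2),
      ‖(n : ℂ) * a n * z ^ (n - 1)‖ ≤ C * ((n : ℝ) + 1) ^ (k+1) * (3/8) ^ n := by
    intro n z hz
    have hz' : ‖z‖ ≤ 3/2 := (hmem z hz).le
    have e1 : ‖z‖ ^ (n - 1) ≤ (3/2 : ℝ) ^ n :=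
      (pow_le_pow_left₀ (norm_nonneg z) hz' _).trans
        (pow_le_pow_right₀ (by norm_num) (Nat.sub_le n 1))
    have e2 : ‖(n : ℂ)‖ = (n : ℝ) := Complex.norm_natCast n
    calc ‖(n : ℂ) * a n * z ^ (n - 1)‖ = (n : ℝ) * ‖a n‖ * ‖z‖ ^ (n-1) := by
          rw [norm_mul, norm_mul, norm_pow, e2]
      _ ≤ ((n : ℝ) + 1) * (C * ((n : ℝ) + 1) ^ k * (1/4) ^ n) * (3/2) ^ n := by
          refine mul_le_mul (mul_le_mul (by linarith) (hB n) (norm_nonneg _) (by positivity))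
            e1 (by positivity) (by positivity)
      _ = C * ((n : ℝ) + 1) ^ (k+1) * (3/8) ^ n := by
          rw [show ((3:ℝ)/8) = (1/4) * (3/2) by norm_num, mul_pow, pow_succ]; ring
  have hu_s : Summable (fun n : ℕ => C * ((n : ℝ) + 1) ^ (k+1) * (3/8) ^ n) :=
    ((summable_aux (k+1) (r := 3/8) (by norm_num) (by norm_num)).mul_left C).congr fun n => by ring
  have hunif : TendstoUniformlyOn
      (fun N z => ∑ n ∈ range N, (n : ℂ) * a n * z ^ (n - 1))
      (fun z => ∑' n : ℕ, (n : ℂ) * a n * z ^ (n - 1)) atTop (ball (0:ℂ) (3/2)) :=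
    tendstoUniformlyOn_tsum_nat hu_s (fun n z hz => hbd n z hz)
  have hderiv : ∀ N : ℕ, ∀ z ∈ ball (0:ℂ) (3/2),
      HasDerivAt (fun w => ∑ n ∈ range N, a n * w ^ n)
        (∑ n ∈ range N, (n : ℂ) * a n * z ^ (n - 1)) z := by
    intro N z _
    refine HasDerivAt.fun_sum fun n _ => ?_
    have := (hasDerivAt_pow n z).const_mul (a n)
    rw [show (n : ℂ) * a n * z ^ (n - 1) = a n * ((n : ℂ) * z ^ (n - 1)) by ring]
    exact this
  have hpt : ∀ z ∈ ball (0:ℂ) (3/2),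
      Tendsto (fun N => ∑ n ∈ range N, a n * z ^ n) atTop (𝓝 (∑' n, a n * z ^ n)) :=
    fun z hz => (summable_term hB (hmem z hz).le).hasSum.tendsto_sum_nat
  have key := hasDerivAt_of_tendstoUniformlyOn isOpen_ball hunif
    (Eventually.of_forall hderiv) hpt hx
  have hsum_d : Summable (fun n : ℕ => (n : ℂ) * a n * x ^ (n - 1)) := by
    apply Summable.of_norm
    exact Summable.of_nonneg_of_le (fun _ => norm_nonneg _) (fun n => hbd n x hx) hu_s
  have heq : ∑' n : ℕ, (n : ℂ) * a n * x ^ (n - 1) = ∑' n : ℕ, ((n : ℂ) + 1) * a (n + 1) * x ^ n := by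
    rw [Summable.tsum_eq_zero_add hsum_d]
    simp only [Nat.cast_zero, zero_mul, zero_add, Nat.add_sub_cancel]
    exact tsum_congr fun n => by push_cast; ring
  rw [← heq]
  exact key

lemma norm_tsum_le_of_geom {t : ℕ → ℂ} {c r : ℝ} (hr0 : 0 ≤ r) (hr : r < 1)
    (hb : ∀ n, ‖t n‖ ≤ c * r ^ n) : ‖∑' n, t n‖ ≤ c / (1 - r) := by
  have hsum : Summable (fun n : ℕ => c * r ^ n) :=
    (summable_geometric_of_lt_one hr0 hr).mul_left c
  have h1 : Summable fun n => ‖t n‖ := Summable.of_nonneg_of_le (fun _ => norm_nonneg _) hb hsum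
  calc ‖∑' n, t n‖ ≤ ∑' n, ‖t n‖ := norm_tsum_le_tsum_norm h1
    _ ≤ ∑' n : ℕ, c * r ^ n := Summable.tsum_le_tsum hb h1 hsum
    _ = c * (1 - r)⁻¹ := by rw [tsum_mul_left, tsum_geometric_of_lt_one hr0 hr]
    _ = c / (1 - r) := (div_eq_mul_inv _ _).symm

lemma mem_expball {w : ℂ} (hw : ‖w - 1‖ ≤ 1/40) : w ∈ Complex.exp '' Metric.ball 0 1 := by
  have hne : w ≠ 0 := by
    intro h
    rw [h] at hw
    simp at hw
    norm_num at hw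
  refine ⟨Complex.log w, ?_, Complex.exp_log hne⟩
  rw [mem_ball, dist_zero_right]
  have hlw : Complex.log w = Complex.log (1 + (w - 1)) := by congr 1; ring
  rw [hlw]
  calc ‖Complex.log (1 + (w-1))‖ ≤ 3/2 * ‖w-1‖ :=
        Complex.norm_log_one_add_half_le_self (by linarith)
    _ ≤ 3/2 * (1/40) := by nlinarith
    _ < 1 := by norm_num


noncomputable def pr (r : ℝ) (n : ℕ) : ℝ := ∏ k ∈ Finset.range n, (r + k)

noncomputable def sa (κ : ℝ) (n : ℕ) : ℂ := (1/4) ^ n / (poch (3/2) n * poch (κ:ℂ) n)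
noncomputable def sb (κ : ℝ) (n : ℕ) : ℂ := ((n : ℂ) + 1) * sa κ (n+1)
noncomputable def sc (κ : ℝ) (n : ℕ) : ℂ := ((n : ℂ) + 1) * sb κ (n+1)
noncomputable def VV (κ : ℝ) (z : ℂ) : ℂ := ∑' n : ℕ, sa κ n * z ^ n
noncomputable def WW (κ : ℝ) (z : ℂ) : ℂ := ∑' n : ℕ, sb κ n * z ^ n
noncomputable def XX (κ : ℝ) (z : ℂ) : ℂ := ∑' n : ℕ, sc κ n * z ^ n

lemma poch_ofReal (r : ℝ) (n : ℕ) :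
    poch (r : ℂ) n = ((∏ k ∈ Finset.range n, (r + k) : ℝ) : ℂ) := by
  rw [poch, Complex.ofReal_prod]
  exact Finset.prod_congr rfl fun k _ => by push_cast; ring

lemma pr_pos {r : ℝ} (hr : 0 < r) (n : ℕ) : 0 < pr r n :=
  Finset.prod_pos fun k _ => by positivity

lemma pr_ge_one {r : ℝ} (hr : 1 ≤ r) (n : ℕ) : 1 ≤ pr r n := by
  show (1:ℝ) ≤ ∏ k ∈ Finset.range n, (r + (k:ℝ))
  calc (1:ℝ) = ∏ _k ∈ Finset.range n, (1:ℝ) := by simp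
    _ ≤ ∏ k ∈ Finset.range n, (r + (k:ℝ)) := by
        refine Finset.prod_le_prod (fun k _ => by norm_num) (fun k _ => ?_)
        have : (0:ℝ) ≤ (k:ℝ) := Nat.cast_nonneg k
        linarith

lemma pr_lb {r t : ℝ} (h0 : 0 ≤ r) (ht : 0 ≤ t) (hk : ∀ k : ℕ, t ≤ r + (k+1)) (m : ℕ) :
    r * t ^ m ≤ pr r (m+1) := by
  rw [pr, Finset.prod_range_succ']
  have h1 : t ^ m ≤ ∏ k ∈ Finset.range m, (r + (k+1)) := by
    calc t ^ m = ∏ _k ∈ Finset.range m, t := by rw [Finset.prod_const, Finset.card_range]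
      _ ≤ _ := Finset.prod_le_prod (fun k _ => ht) (fun k _ => by
          have := hk k; push_cast; linarith)
  have h2 : ∀ k ∈ Finset.range m, ((r : ℝ) + ((k+1 : ℕ) : ℝ)) = r + ((k:ℝ)+1) := by
    intro k _; push_cast; ring
  rw [Finset.prod_congr rfl h2]
  have : r + ((0:ℕ):ℝ) = r := by push_cast; ring
  rw [this]
  calc r * t ^ m ≤ r * ∏ k ∈ Finset.range m, (r + ((k:ℝ)+1)) := by
        exact mul_le_mul_of_nonneg_left h1 h0
    _ = (∏ k ∈ Finset.range m, (r + ((k:ℝ)+1))) * r := by ring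

lemma sa_eq (κ : ℝ) (n : ℕ) :
    sa κ n = (((1/4) ^ n / (pr (3/2) n * pr κ n) : ℝ) : ℂ) := by
  rw [sa, show ((3:ℂ)/2) = (((3:ℝ)/2 : ℝ) : ℂ) by norm_num, poch_ofReal, poch_ofReal, pr, pr]
  push_cast
  ring

lemma norm_sa (κ : ℝ) (hκ0 : 0 < κ) (n : ℕ) :
    ‖sa κ n‖ = (1/4) ^ n / (pr (3/2) n * pr κ n) := by
  have h1 := pr_pos (by norm_num : (0:ℝ) < 3/2) n
  have h2 := pr_pos hκ0 n
  rw [sa_eq, Complex.norm_real, Real.norm_eq_abs]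
  exact abs_of_nonneg (by positivity)

lemma sa_le {κ : ℝ} (hκ : 10 ≤ κ) (n : ℕ) : ‖sa κ n‖ ≤ (1/4) ^ n := by
  rw [norm_sa κ (by linarith) n]
  apply div_le_self (by positivity)
  have h1 := pr_ge_one (by norm_num : (1:ℝ) ≤ 3/2) n
  have h2 := pr_ge_one (by linarith : (1:ℝ) ≤ κ) n
  nlinarith

lemma sa_zero (κ : ℝ) : sa κ 0 = 1 := by simp [sa, poch]

lemma six_sa_one {κ : ℝ} (hκ : 10 ≤ κ) : 6 * (κ:ℂ) * sa κ 1 = 1 := by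
  have hκC : (κ:ℂ) ≠ 0 := by
    exact_mod_cast (by linarith : (0:ℝ) < κ).ne'
  rw [sa, poch, poch]
  simp [Finset.prod_range_one]
  field_simp
  ring

lemma key6 {κ : ℝ} (hκ : 10 ≤ κ) (m : ℕ) :
    ‖6 * (κ:ℂ) * sa κ (m+1)‖ ≤ (1/100) ^ m := by
  have hκ0 : (0:ℝ) < κ := by linarith
  have hP : (3/2) * (5/2:ℝ) ^ m ≤ pr (3/2) (m+1) :=
    pr_lb (by norm_num) (by norm_num) (fun k => by
      have : (0:ℝ) ≤ (k:ℝ) := Nat.cast_nonneg k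
      linarith) m
  have hQ : κ * (10:ℝ) ^ m ≤ pr κ (m+1) :=
    pr_lb hκ0.le (by norm_num) (fun k => by
      have : (0:ℝ) ≤ (k:ℝ) := Nat.cast_nonneg k
      linarith) m
  have hPp := pr_pos (by norm_num : (0:ℝ) < 3/2) (m+1)
  have hQp := pr_pos hκ0 (m+1)
  have hnorm : ‖6 * (κ:ℂ) * sa κ (m+1)‖ =
      6 * κ * ((1/4) ^ (m+1) / (pr (3/2) (m+1) * pr κ (m+1))) := by
    rw [norm_mul, norm_sa κ hκ0, show ((6:ℂ) * (κ:ℂ)) = (((6*κ : ℝ)) : ℂ) by push_cast; ring,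
      Complex.norm_real, Real.norm_eq_abs, _root_.abs_of_nonneg (by positivity : (0:ℝ) ≤ 6*κ)]
  rw [hnorm]
  have hp : (1/100:ℝ)^m * (5/2)^m * 10^m = (1/4)^m := by
    rw [← mul_pow, ← mul_pow]; norm_num
  have heq : (1/100:ℝ)^m * ((3/2) * (5/2)^m * (κ * 10^m)) = 6 * κ * ((1/4) ^ (m+1)) := by
    rw [pow_succ]
    linear_combination (3/2 * κ) * hp
  rw [show 6 * κ * ((1/4:ℝ) ^ (m+1) / (pr (3/2) (m+1) * pr κ (m+1))) =
      (6 * κ * (1/4) ^ (m+1)) / (pr (3/2) (m+1) * pr κ (m+1)) by ring]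
  rw [div_le_iff₀ (by positivity)]
  calc 6 * κ * (1/4:ℝ) ^ (m+1) = (1/100)^m * ((3/2) * (5/2)^m * (κ * 10^m)) := heq.symm
    _ ≤ (1/100)^m * (pr (3/2) (m+1) * pr κ (m+1)) := by
        refine mul_le_mul_of_nonneg_left ?_ (by positivity)
        exact mul_le_mul hP hQ (by positivity) (by linarith)
    _ = (1/100)^m * (pr (3/2) (m+1) * pr κ (m+1)) := rfl

lemma norm_coe_succ (n : ℕ) : ‖((n:ℂ)+1)‖ = (n:ℝ)+1 := by
  rw [show ((n:ℂ)+1) = (((n+1:ℕ)) : ℂ) by push_cast; ring, Complex.norm_natCast]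
  push_cast; ring

lemma sa_bound {κ : ℝ} (hκ : 10 ≤ κ) (n : ℕ) :
    ‖sa κ n‖ ≤ 1 * ((n : ℝ) + 1) ^ 0 * (1/4) ^ n := by
  simpa using sa_le hκ n

lemma sb_bound {κ : ℝ} (hκ : 10 ≤ κ) (n : ℕ) :
    ‖sb κ n‖ ≤ 1 * ((n : ℝ) + 1) ^ 1 * (1/4) ^ n := by
  rw [sb, norm_mul, norm_coe_succ]
  have h1 : ‖sa κ (n+1)‖ ≤ (1/4:ℝ) ^ (n+1) := sa_le hκ (n+1)
  have h2 : (1/4:ℝ) ^ (n+1) ≤ (1/4) ^ n :=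
    pow_le_pow_of_le_one (by norm_num) (by norm_num) (Nat.le_succ n)
  have h3 : (0:ℝ) ≤ (n:ℝ) + 1 := by positivity
  calc ((n:ℝ)+1) * ‖sa κ (n+1)‖ ≤ ((n:ℝ)+1) * (1/4)^n :=
        mul_le_mul_of_nonneg_left (h1.trans h2) h3
    _ = 1 * ((n : ℝ) + 1) ^ 1 * (1/4) ^ n := by ring

lemma sc_bound {κ : ℝ} (hκ : 10 ≤ κ) (n : ℕ) :
    ‖sc κ n‖ ≤ 1 * ((n : ℝ) + 1) ^ 2 * (1/4) ^ n := by
  rw [sc, norm_mul, norm_coe_succ, sb, norm_mul, norm_coe_succ]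
  have h1 : ‖sa κ (n+1+1)‖ ≤ (1/4:ℝ)^(n+2) := sa_le hκ (n+2)
  have hn2 : ((n+1:ℕ):ℝ)+1 = (n:ℝ)+2 := by push_cast; ring
  rw [hn2]
  have h4 : (0:ℝ) ≤ (n:ℝ) := Nat.cast_nonneg n
  calc ((n:ℝ)+1) * (((n:ℝ)+2) * ‖sa κ (n+1+1)‖)
      ≤ ((n:ℝ)+1) * (((n:ℝ)+2) * (1/4:ℝ)^(n+2)) := by
        exact mul_le_mul_of_nonneg_left
          (mul_le_mul_of_nonneg_left h1 (by positivity)) (by positivity)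
    _ ≤ 1 * ((n : ℝ) + 1) ^ 2 * (1/4) ^ n := by
        rw [show (1/4:ℝ)^(n+2) = (1/16)*(1/4)^n by rw [pow_add]; ring]
        have hp : (0:ℝ) ≤ (1/4:ℝ)^n := by positivity
        nlinarith [mul_nonneg (mul_nonneg (by linarith : (0:ℝ) ≤ (n:ℝ)+1)
          (by linarith : (0:ℝ) ≤ 15*(n:ℝ)+14)) hp]

lemma VV_zero (κ : ℝ) : VV κ 0 = 1 := by
  rw [VV, tsum_eq_single 0 (fun n hn => by simp [zero_pow hn])]
  simp [sa_zero]

lemma WW_zero {κ : ℝ} (hκ : 10 ≤ κ) : 6 * (κ:ℂ) * WW κ 0 = 1 := by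
  have h : WW κ 0 = sa κ 1 := by
    rw [WW, tsum_eq_single 0 (fun n hn => by simp [zero_pow hn])]
    simp [sb]
  rw [h]
  exact six_sa_one hκ

lemma E1 {κ : ℝ} (hκ : 10 ≤ κ) {z : ℂ} (hz : ‖z‖ ≤ 1) :
    ‖6 * (κ:ℂ) * WW κ z - 1‖ ≤ 1/49 := by
  have hz' : ‖z‖ ≤ 3/2 := hz.trans (by norm_num)
  have hsum : Summable (fun n : ℕ => 6 * (κ:ℂ) * (sb κ n * z ^ n)) :=
    (summable_term (fun n => sb_bound hκ n) hz').mul_left _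
  have h1 : 6 * (κ:ℂ) * WW κ z = ∑' n : ℕ, 6 * (κ:ℂ) * (sb κ n * z ^ n) := by
    rw [WW, tsum_mul_left]
  rw [h1, Summable.tsum_eq_zero_add hsum]
  have h2 : 6 * (κ:ℂ) * (sb κ 0 * z ^ 0) = 1 := by
    have h3 : sb κ 0 * z ^ 0 = sa κ 1 := by simp [sb]
    rw [h3]; exact six_sa_one hκ
  rw [h2, add_sub_cancel_left]
  have key : ∀ n : ℕ, ‖6 * (κ:ℂ) * (sb κ (n+1) * z ^ (n+1))‖ ≤ (1/50) * (1/50:ℝ)^n := by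
    intro n
    have hstep : 6 * (κ:ℂ) * (sb κ (n+1) * z ^ (n+1)) =
        (((n+1:ℕ):ℂ)+1) * (6 * (κ:ℂ) * sa κ (n+1+1)) * z ^ (n+1) := by
      rw [sb]; ring
    rw [hstep, norm_mul, norm_mul, norm_pow, norm_coe_succ]
    have hk := key6 hκ (n+1)
    have hzp : ‖z‖^(n+1) ≤ 1 := pow_le_one₀ (norm_nonneg z) hz
    have hc : (((n+1:ℕ):ℝ)+1) = (n:ℝ)+2 := by push_cast; ring
    rw [hc]
    have h2p : ((n:ℝ)+2) ≤ 2^(n+1) := by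
      have hh := nat_succ_le_two_pow (n+1)
      push_cast at hh ⊢
      linarith
    calc ((n:ℝ)+2) * ‖6 * (κ:ℂ) * sa κ (n+1+1)‖ * ‖z‖^(n+1)
        ≤ ((n:ℝ)+2) * (1/100)^(n+1) * 1 :=
          mul_le_mul (mul_le_mul_of_nonneg_left hk (by positivity)) hzp
            (by positivity) (by positivity)
      _ ≤ 2^(n+1) * (1/100)^(n+1) := by
          rw [mul_one]
          exact mul_le_mul_of_nonneg_right h2p (by positivity)
      _ = (1/50:ℝ)^(n+1) := by rw [← mul_pow]; norm_num
      _ = (1/50) * (1/50:ℝ)^n := by rw [pow_succ]; ring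
  calc ‖∑' n : ℕ, 6 * (κ:ℂ) * (sb κ (n+1) * z ^ (n+1))‖ ≤ (1/50) / (1 - 1/50) :=
        norm_tsum_le_of_geom (by norm_num) (by norm_num) key
    _ = 1/49 := by norm_num

lemma E2 {κ : ℝ} (hκ : 10 ≤ κ) {z : ℂ} (hz : ‖z‖ ≤ 1) :
    ‖6 * (κ:ℂ) * XX κ z‖ ≤ 1/48 := by
  have h1 : 6 * (κ:ℂ) * XX κ z = ∑' n : ℕ, 6 * (κ:ℂ) * (sc κ n * z ^ n) := by
    rw [XX, tsum_mul_left]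
  rw [h1]
  have key : ∀ n : ℕ, ‖6 * (κ:ℂ) * (sc κ n * z ^ n)‖ ≤ (1/50) * (1/25:ℝ)^n := by
    intro n
    have hstep : 6 * (κ:ℂ) * (sc κ n * z ^ n) =
        ((n:ℂ)+1) * ((((n+1:ℕ)):ℂ)+1) * (6 * (κ:ℂ) * sa κ (n+1+1)) * z ^ n := by
      rw [sc, sb]; ring
    rw [hstep, norm_mul, norm_mul, norm_mul, norm_pow, norm_coe_succ, norm_coe_succ]
    have hk := key6 hκ (n+1)
    have hzp : ‖z‖^n ≤ 1 := pow_le_one₀ (norm_nonneg z) hz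
    have hc : (((n+1:ℕ):ℝ)+1) = (n:ℝ)+2 := by push_cast; ring
    rw [hc]
    have hA : ((n:ℝ)+1) ≤ 2^n := nat_succ_le_two_pow n
    have hB : ((n:ℝ)+2) ≤ 2*2^n := by
      have hh := nat_succ_le_two_pow (n+1)
      rw [pow_succ] at hh
      push_cast at hh ⊢
      linarith
    have hmm : (2:ℝ)^n * 2^n * (1/100)^n = (1/25)^n := by
      rw [← mul_pow, ← mul_pow]; norm_num
    calc ((n:ℝ)+1) * ((n:ℝ)+2) * ‖6 * (κ:ℂ) * sa κ (n+1+1)‖ * ‖z‖^n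
        ≤ ((n:ℝ)+1) * ((n:ℝ)+2) * (1/100)^(n+1) * 1 := by
          refine mul_le_mul (mul_le_mul_of_nonneg_left hk (by positivity)) hzp
            (by positivity) (by positivity)
      _ = ((n:ℝ)+1) * ((n:ℝ)+2) * (1/100)^(n+1) := by ring
      _ ≤ (2^n) * (2*2^n) * (1/100)^(n+1) := by
          refine mul_le_mul_of_nonneg_right (mul_le_mul hA hB (by positivity) (by positivity))
            (by positivity)
      _ = (1/50) * (1/25:ℝ)^n := by
          rw [pow_succ]
          linear_combination (1/50:ℝ) * hmm
  calc ‖∑' n : ℕ, 6 * (κ:ℂ) * (sc κ n * z ^ n)‖ ≤ (1/50) / (1 - 1/25) :=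
        norm_tsum_le_of_geom (by norm_num) (by norm_num) key
    _ = 1/48 := by norm_num

/-- For the normalized modified Struve function `V_ν = u_{ν+3/2, −1}` (case `b = 1`,
`c = −1`), under the stated condition on `ν`, the function `3(2ν+3)(V_ν − 1)` is
exponential convex and `z ↦ 3(2ν+3) z V'_ν(z)` is exponential starlike. -/
theorem modified_struve_convex_starlike (ν : ℝ) (hν : ∀ n : ℕ, ν + 3 / 2 ≠ -(n : ℝ))
    (h : ν ≥ Real.exp 1 / (8 * Real.sin 1 + 6 - 2 * Real.exp 1) *
        (4 * (Real.exp 1 - 1) ^ 3 + 6 * (Real.exp 1 - 1) ^ 2 + (Real.exp 1 + 1) +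
          6 / Real.exp 1 - 12 / (Real.exp 1) ^ 2) - 3 / 2) :
    memKe (fun z => 3 * (2 * (ν : ℂ) + 3) * (struveU ((ν : ℂ) + 3 / 2) (-1) z - 1)) ∧
    memSe (fun z => 3 * (2 * (ν : ℂ) + 3) * z * deriv (struveU ((ν : ℂ) + 3 / 2) (-1)) z) := by
  have hκR : 10 ≤ ν + 3/2 := kappa_ge ν h
  set κ : ℝ := ν + 3/2 with hκdef
  have hκ : 10 ≤ κ := hκR
  have hκ0 : (0:ℝ) < κ := by linarith
  have h6κ : (6:ℂ) * (κ:ℂ) ≠ 0 := by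
    have hc : (κ:ℂ) ≠ 0 := by exact_mod_cast hκ0.ne'
    simp [hc]
  have hKc : ((ν:ℂ) + 3/2) = ((κ:ℝ):ℂ) := by rw [hκdef]; push_cast; ring
  have hconst : (3:ℂ) * (2*(ν:ℂ)+3) = 6 * (κ:ℂ) := by rw [hκdef]; push_cast; ring
  have hstruve : struveU ((ν:ℂ)+3/2) (-1) = VV κ := by
    funext z
    rw [hKc, struveU, VV]
    refine tsum_congr fun n => ?_
    rw [sa]
    norm_num
  rw [hstruve, hconst]
  have hBS : Metric.ball (0:ℂ) 1 ⊆ Metric.ball (0:ℂ) (3/2) :=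
    Metric.ball_subset_ball (by norm_num)
  have hnorm1 : ∀ z : ℂ, z ∈ Metric.ball (0:ℂ) 1 → ‖z‖ ≤ 1 := fun z hz => by
    have := mem_ball.mp hz; rw [dist_zero_right] at this; linarith
  have h0B : (0:ℂ) ∈ Metric.ball (0:ℂ) 1 := mem_ball_self (by norm_num)
  have h0S : (0:ℂ) ∈ Metric.ball (0:ℂ) (3/2) := mem_ball_self (by norm_num)
  have hWeq : ∀ x : ℂ, WW κ x = ∑' n : ℕ, ((n : ℂ) + 1) * sa κ (n + 1) * x ^ n :=
    fun x => tsum_congr fun n => by rw [sb]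
  have hXeq : ∀ x : ℂ, XX κ x = ∑' n : ℕ, ((n : ℂ) + 1) * sb κ (n + 1) * x ^ n :=
    fun x => tsum_congr fun n => by rw [sc]
  have hVd : ∀ x ∈ Metric.ball (0:ℂ) (3/2), HasDerivAt (VV κ) (WW κ x) x := by
    intro x hx
    rw [hWeq x]
    exact hasDerivAt_tsum_pow (sa_bound hκ) hx
  have hWd : ∀ x ∈ Metric.ball (0:ℂ) (3/2), HasDerivAt (WW κ) (XX κ x) x := by
    intro x hx
    rw [hXeq x]
    exact hasDerivAt_tsum_pow (fun n => sb_bound hκ n) hx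
  have hXd : ∀ x ∈ Metric.ball (0:ℂ) (3/2), DifferentiableAt ℂ (XX κ) x := by
    intro x hx
    exact (hasDerivAt_tsum_pow (fun n => sc_bound hκ n) hx).differentiableAt
  have hWlb : ∀ z ∈ Metric.ball (0:ℂ) 1, (48:ℝ)/49 ≤ ‖6 * (κ:ℂ) * WW κ z‖ := by
    intro z hz
    have h1 := E1 hκ (hnorm1 z hz)
    have h2 : ‖(1:ℂ)‖ - ‖6 * (κ:ℂ) * WW κ z‖ ≤ ‖(1:ℂ) - 6 * (κ:ℂ) * WW κ z‖ :=
      norm_sub_norm_le _ _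
    rw [norm_sub_rev] at h2
    simp only [norm_one] at h2
    linarith
  have hW0 : ∀ z ∈ Metric.ball (0:ℂ) 1, 6 * (κ:ℂ) * WW κ z ≠ 0 := by
    intro z hz hzero
    have := hWlb z hz
    rw [hzero] at this
    simp at this
    linarith
  have hWne : ∀ z ∈ Metric.ball (0:ℂ) 1, WW κ z ≠ 0 := by
    intro z hz hzero
    exact hW0 z hz (by rw [hzero, mul_zero])
  have hF1d : ∀ x ∈ Metric.ball (0:ℂ) (3/2),
      HasDerivAt (fun z => 6 * (κ:ℂ) * (VV κ z - 1)) (6 * (κ:ℂ) * WW κ x) x :=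
    fun x hx => ((hVd x hx).sub_const 1).const_mul (6 * (κ:ℂ))
  have hderivF1 : ∀ x ∈ Metric.ball (0:ℂ) (3/2),
      deriv (fun z => 6 * (κ:ℂ) * (VV κ z - 1)) x = 6 * (κ:ℂ) * WW κ x :=
    fun x hx => (hF1d x hx).deriv
  have hddF1 : ∀ z ∈ Metric.ball (0:ℂ) 1,
      deriv (deriv (fun z => 6 * (κ:ℂ) * (VV κ z - 1))) z = 6 * (κ:ℂ) * XX κ z := by
    intro z hz
    have hev : deriv (fun z => 6 * (κ:ℂ) * (VV κ z - 1)) =ᶠ[𝓝 z]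
        (fun y => 6 * (κ:ℂ) * WW κ y) :=
      Filter.eventuallyEq_of_mem (isOpen_ball.mem_nhds (hBS hz)) (fun y hy => hderivF1 y hy)
    rw [hev.deriv_eq]
    exact ((hWd z (hBS hz)).const_mul (6 * (κ:ℂ))).deriv
  have hWdiff : ∀ x ∈ Metric.ball (0:ℂ) 1,
      DifferentiableAt ℂ (fun z => 6 * (κ:ℂ) * WW κ z) x :=
    fun x hx => ((hWd x (hBS hx)).const_mul (6 * (κ:ℂ))).differentiableAt
  have hXdiff : ∀ x ∈ Metric.ball (0:ℂ) 1,
      DifferentiableAt ℂ (fun z => 6 * (κ:ℂ) * XX κ z) x :=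
    fun x hx => ((hXd x (hBS hx)).const_mul (6 * (κ:ℂ)))
  constructor
  · -- memKe
    refine ⟨?_, ?_, ?_, ?_, ?_, ?_, ?_⟩
    · refine DifferentiableOn.analyticOnNhd ?_ isOpen_ball
      exact fun x hx => (hF1d x (hBS hx)).differentiableAt.differentiableWithinAt
    · simp [VV_zero]
    · rw [hderivF1 0 h0S]
      exact WW_zero hκ
    · intro z hz
      rw [hderivF1 z (hBS hz)]
      exact hW0 z hz
    · -- analyticity of p1
      have hQdiff : DifferentiableOn ℂ
          (fun z => 1 + z * (6 * (κ:ℂ) * XX κ z) / (6 * (κ:ℂ) * WW κ z))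
          (Metric.ball (0:ℂ) 1) := by
        refine DifferentiableOn.add (differentiableOn_const 1) ?_
        refine DifferentiableOn.div ?_
          (fun x hx => (hWdiff x hx).differentiableWithinAt) hW0
        exact DifferentiableOn.mul differentiableOn_id
          (fun x hx => (hXdiff x hx).differentiableWithinAt)
      refine (hQdiff.analyticOnNhd isOpen_ball).congr isOpen_ball ?_
      intro z hz
      show 1 + z * (6 * (κ:ℂ) * XX κ z) / (6 * (κ:ℂ) * WW κ z)
          = 1 + z * deriv (deriv (fun z => 6 * (κ:ℂ) * (VV κ z - 1))) z /
            deriv (fun z => 6 * (κ:ℂ) * (VV κ z - 1)) z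
      rw [hddF1 z hz, hderivF1 z (hBS hz)]
    · simp
    · intro z hz
      show 1 + z * deriv (deriv (fun z => 6 * (κ:ℂ) * (VV κ z - 1))) z /
          deriv (fun z => 6 * (κ:ℂ) * (VV κ z - 1)) z ∈ Complex.exp '' Metric.ball 0 1
      rw [hddF1 z hz, hderivF1 z (hBS hz)]
      apply mem_expball
      rw [add_sub_cancel_left, norm_div, norm_mul]
      have hx := E2 hκ (hnorm1 z hz)
      have hw := hWlb z hz
      calc ‖z‖ * ‖6 * (κ:ℂ) * XX κ z‖ / ‖6 * (κ:ℂ) * WW κ z‖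
          ≤ (1 * (1/48)) / (48/49) := by
            refine div_le_div₀ (by norm_num) ?_ (by norm_num) hw
            exact mul_le_mul (hnorm1 z hz) hx (norm_nonneg _) (by norm_num)
        _ ≤ 1/40 := by norm_num
  · -- memSe
    have hG1eq : ∀ z ∈ Metric.ball (0:ℂ) (3/2),
        6 * (κ:ℂ) * z * deriv (VV κ) z = 6 * (κ:ℂ) * z * WW κ z := by
      intro z hz
      rw [(hVd z hz).deriv]
    have hGd : ∀ x ∈ Metric.ball (0:ℂ) (3/2),
        HasDerivAt (fun z => 6 * (κ:ℂ) * z * WW κ z)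
          (6 * (κ:ℂ) * WW κ x + 6 * (κ:ℂ) * x * XX κ x) x := by
      intro x hx
      have hc : HasDerivAt (fun z : ℂ => 6 * (κ:ℂ) * z) (6 * (κ:ℂ)) x := by
        simpa using (hasDerivAt_id x).const_mul (6 * (κ:ℂ))
      have hm := hc.mul (hWd x hx)
      convert hm using 1
      all_goals rfl
    have hderivG : ∀ z ∈ Metric.ball (0:ℂ) 1,
        deriv (fun z => 6 * (κ:ℂ) * z * deriv (VV κ) z) z
          = 6 * (κ:ℂ) * WW κ z + 6 * (κ:ℂ) * z * XX κ z := by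
      intro z hz
      have hev : (fun z => 6 * (κ:ℂ) * z * deriv (VV κ) z) =ᶠ[𝓝 z]
          (fun z => 6 * (κ:ℂ) * z * WW κ z) :=
        Filter.eventuallyEq_of_mem (isOpen_ball.mem_nhds (hBS hz)) (fun y hy => hG1eq y hy)
      rw [hev.deriv_eq]
      exact (hGd z (hBS hz)).deriv
    have hGdiff : ∀ x ∈ Metric.ball (0:ℂ) 1,
        DifferentiableAt ℂ (fun z => 6 * (κ:ℂ) * z * WW κ z) x :=
      fun x hx => (hGd x (hBS hx)).differentiableAt
    have hp2 : ∀ z ∈ Metric.ball (0:ℂ) 1,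
        (6 * (κ:ℂ) * WW κ z + 6 * (κ:ℂ) * z * XX κ z) / (6 * (κ:ℂ) * WW κ z)
          = (if z = 0 then 1
            else z * deriv (fun z => 6 * (κ:ℂ) * z * deriv (VV κ) z) z /
              (6 * (κ:ℂ) * z * deriv (VV κ) z)) := by
      intro z hz
      by_cases hz0 : z = 0
      · subst hz0
        rw [if_pos rfl]
        rw [show 6 * (κ:ℂ) * (0:ℂ) * XX κ 0 = 0 by ring, add_zero]
        exact div_self (hW0 0 h0B)
      · rw [if_neg hz0, hderivG z hz, (hVd z (hBS hz)).deriv]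
        rw [div_eq_div_iff (hW0 z hz)
          (mul_ne_zero (mul_ne_zero h6κ hz0) (hWne z hz))]
        ring
    refine ⟨?_, ?_, ?_, ?_, ?_, ?_, ?_⟩
    · have hGan : AnalyticOnNhd ℂ (fun z => 6 * (κ:ℂ) * z * WW κ z)
          (Metric.ball (0:ℂ) 1) :=
        DifferentiableOn.analyticOnNhd
          (fun x hx => (hGdiff x hx).differentiableWithinAt) isOpen_ball
      refine hGan.congr isOpen_ball ?_
      intro z hz
      exact (hG1eq z (hBS hz)).symm
    · simp
    · rw [hderivG 0 h0B]
      rw [show 6 * (κ:ℂ) * (0:ℂ) * XX κ 0 = 0 by ring, add_zero]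
      exact WW_zero hκ
    · intro z hz hz0
      show 6 * (κ:ℂ) * z * deriv (VV κ) z ≠ 0
      rw [hG1eq z (hBS hz)]
      exact mul_ne_zero (mul_ne_zero h6κ hz0) (hWne z hz)
    · -- analyticity of p2
      have hQ2diff : DifferentiableOn ℂ
          (fun z => (6 * (κ:ℂ) * WW κ z + 6 * (κ:ℂ) * z * XX κ z) / (6 * (κ:ℂ) * WW κ z))
          (Metric.ball (0:ℂ) 1) := by
        refine DifferentiableOn.div ?_
          (fun x hx => (hWdiff x hx).differentiableWithinAt) hW0
        refine DifferentiableOn.add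
          (fun x hx => (hWdiff x hx).differentiableWithinAt) ?_
        intro x hx
        refine DifferentiableAt.differentiableWithinAt ?_
        have hmul : DifferentiableAt ℂ (fun z : ℂ => 6 * (κ:ℂ) * z) x :=
          differentiableAt_id.const_mul _
        exact hmul.mul (hXd x (hBS hx))
      refine (hQ2diff.analyticOnNhd isOpen_ball).congr isOpen_ball ?_
      intro z hz
      exact hp2 z hz
    · simp
    · intro z hz
      show (if z = 0 then (1:ℂ)
          else z * deriv (fun z => 6 * (κ:ℂ) * z * deriv (VV κ) z) z /
            (6 * (κ:ℂ) * z * deriv (VV κ) z)) ∈ Complex.exp '' Metric.ball 0 1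
      rw [← hp2 z hz]
      apply mem_expball
      rw [div_sub_one (hW0 z hz),
        show 6 * (κ:ℂ) * WW κ z + 6 * (κ:ℂ) * z * XX κ z - 6 * (κ:ℂ) * WW κ z
          = z * (6 * (κ:ℂ) * XX κ z) by ring, norm_div, norm_mul]
      have hx := E2 hκ (hnorm1 z hz)
      have hw := hWlb z hz
      calc ‖z‖ * ‖6 * (κ:ℂ) * XX κ z‖ / ‖6 * (κ:ℂ) * WW κ z‖
          ≤ (1 * (1/48)) / (48/49) := by
            refine div_le_div₀ (by norm_num) ?_ (by norm_num) hw
            exact mul_le_mul (hnorm1 z hz) hx (norm_nonneg _) (by norm_num)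
        _ ≤ 1/40 := by norm_num
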